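/- With A and M(A) as above, a morphism f : B → M(A) in C from a semigroup B is multiplicative (a semigroup morphism into the monoid M(A)) if and only if the corresponding M-morphism B ⇸ A with components f₁ = e₁∘(f⊗1) and f₂ = e₂∘(1⊗f) is multiplicative, i.e. f₁∘(m_B⊗1) = f₁∘(1⊗f₁) and f₂∘(1⊗m_B) = f₂∘(f₂⊗1). -/

import Mathlib

open CategoryTheory Category MonoidalCategory Limits

universe v u

variable {C : Type u} [Category.{v} C] [MonoidalCategory C]

/-- A semigroup multiplication is non-degenerate. -/
def NonDeg (A : C) (m : A ⊗ A ⟶ A) : Prop :=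
  (∀ X Y : C, Function.Injective (fun f : X ⟶ Y ⊗ A =>
      (f ▷ A) ≫ (α_ Y A A).hom ≫ (Y ◁ m))) ∧
  (∀ X Y : C, Function.Injective (fun g : X ⟶ A ⊗ Y =>
      (A ◁ g) ≫ (α_ A A Y).inv ≫ (m ▷ Y)))

/-- Associativity of a semigroup multiplication. -/
def SgAssoc (A : C) (m : A ⊗ A ⟶ A) : Prop :=
  (m ▷ A) ≫ m = (α_ A A A).hom ≫ (A ◁ m) ≫ m

/-- A pair (f₁, f₂) is an `𝕄`-morphism `A ⇸ B`: eq. (2). -/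
def IsMMor {A B : C} (mB : B ⊗ B ⟶ B) (f₁ : A ⊗ B ⟶ B) (f₂ : B ⊗ A ⟶ B) : Prop :=
  (f₂ ▷ B) ≫ mB = (α_ B A B).hom ≫ (B ◁ f₁) ≫ mB

/-- The first component of an `𝕄`-morphism is multiplicative. -/
def Mult₁ {A B : C} (mA : A ⊗ A ⟶ A) (f₁ : A ⊗ B ⟶ B) : Prop :=
  (mA ▷ B) ≫ f₁ = (α_ A A B).hom ≫ (A ◁ f₁) ≫ f₁

/-- The second component of an `𝕄`-morphism is multiplicative. -/
def Mult₂ {A B : C} (mA : A ⊗ A ⟶ A) (f₂ : B ⊗ A ⟶ B) : Prop :=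
  (α_ B A A).hom ≫ (B ◁ mA) ≫ f₂ = (f₂ ▷ A) ≫ f₂

/-- The multiplier monoid `𝕄(A)` of a non-degenerate semigroup `A`, presented by its
universal property: morphisms `X ⟶ 𝕄(A)` correspond bijectively to `𝕄`-morphisms
`X ⇸ A` (Paragraph 2.7, via the pullback of `φ` and `ψ`). -/
structure MultiplierMonoid {C : Type u} [Category.{v} C] [MonoidalCategory C]
    (A : C) (m : A ⊗ A ⟶ A) where
  M : C
  e₁ : M ⊗ A ⟶ A
  e₂ : A ⊗ M ⟶ A
  compat : IsMMor m e₁ e₂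
  lift : ∀ {X : C} (f₁ : X ⊗ A ⟶ A) (f₂ : A ⊗ X ⟶ A), IsMMor m f₁ f₂ →
      ∃! f : X ⟶ M, f₁ = (f ▷ A) ≫ e₁ ∧ f₂ = (A ◁ f) ≫ e₂

/-- Proposition 2.8 (ii): a morphism `f : B ⟶ 𝕄(A)` from a semigroup `B` is multiplicative
if and only if the corresponding `𝕄`-morphism `B ⇸ A`, with components
`f₁ = e₁ ∘ (f ⊗ 1)` and `f₂ = e₂ ∘ (1 ⊗ f)`, is multiplicative. -/
theorem multiplierMonoid_mor_mult_iff [BraidedCategory C] [MonoidalClosed C]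
    {A B : C} (m : A ⊗ A ⟶ A) (hassoc : SgAssoc A m) (hnd : NonDeg A m)
    (M : MultiplierMonoid A m) (mM : M.M ⊗ M.M ⟶ M.M)
    (h1 : (mM ▷ A) ≫ M.e₁ = (α_ M.M M.M A).hom ≫ (M.M ◁ M.e₁) ≫ M.e₁)
    (h2 : (A ◁ mM) ≫ M.e₂ = (α_ A M.M M.M).inv ≫ (M.e₂ ▷ M.M) ≫ M.e₂)
    (mB : B ⊗ B ⟶ B) (hB : SgAssoc B mB) (f : B ⟶ M.M) :
    mB ≫ f = (f ⊗ₘ f) ≫ mM ↔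
      (Mult₁ mB ((f ▷ A) ≫ M.e₁) ∧ Mult₂ mB ((A ◁ f) ≫ M.e₂)) := by
  have key1 : (((f ⊗ₘ f) ≫ mM) ▷ A) ≫ M.e₁
      = (α_ B B A).hom ≫ (B ◁ ((f ▷ A) ≫ M.e₁)) ≫ (f ▷ A) ≫ M.e₁ := by
    rw [comp_whiskerRight, assoc, h1, tensorHom_def f f, comp_whiskerRight, assoc,
      associator_naturality_middle_assoc, associator_naturality_left_assoc,
      MonoidalCategory.whiskerLeft_comp_assoc]
    rw [← whisker_exchange_assoc, ← whisker_exchange_assoc]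
  have key2 : (A ◁ ((f ⊗ₘ f) ≫ mM)) ≫ M.e₂
      = (α_ A B B).inv ≫ (((A ◁ f) ≫ M.e₂) ▷ B) ≫ (A ◁ f) ≫ M.e₂ := by
    rw [MonoidalCategory.whiskerLeft_comp, assoc, h2, tensorHom_def' f f,
      MonoidalCategory.whiskerLeft_comp, assoc,
      associator_inv_naturality_middle_assoc, associator_inv_naturality_right_assoc,
      comp_whiskerRight_assoc]
    rw [whisker_exchange_assoc, whisker_exchange_assoc]
  constructor
  · rintro hf
    constructor
    · show (mB ▷ A) ≫ (f ▷ A) ≫ M.e₁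
        = (α_ B B A).hom ≫ (B ◁ ((f ▷ A) ≫ M.e₁)) ≫ (f ▷ A) ≫ M.e₁
      rw [← assoc, ← comp_whiskerRight, hf, key1]
    · show (α_ A B B).hom ≫ (A ◁ mB) ≫ (A ◁ f) ≫ M.e₂
        = (((A ◁ f) ≫ M.e₂) ▷ B) ≫ (A ◁ f) ≫ M.e₂
      rw [← MonoidalCategory.whiskerLeft_comp_assoc, hf, key2]
      simp
  · rintro ⟨hm1, hm2⟩
    have hm1' : (mB ▷ A) ≫ (f ▷ A) ≫ M.e₁
        = (α_ B B A).hom ≫ (B ◁ ((f ▷ A) ≫ M.e₁)) ≫ (f ▷ A) ≫ M.e₁ := hm1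
    have hm2' : (α_ A B B).hom ≫ (A ◁ mB) ≫ (A ◁ f) ≫ M.e₂
        = (((A ◁ f) ≫ M.e₂) ▷ B) ≫ (A ◁ f) ≫ M.e₂ := hm2
    have hff : IsMMor m ((f ▷ A) ≫ M.e₁) ((A ◁ f) ≫ M.e₂) := by
      unfold IsMMor
      rw [comp_whiskerRight, assoc, M.compat, associator_naturality_middle_assoc,
        MonoidalCategory.whiskerLeft_comp_assoc]
    have hgg : IsMMor m ((mB ▷ A) ≫ (f ▷ A) ≫ M.e₁) ((A ◁ mB) ≫ (A ◁ f) ≫ M.e₂) := by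
      unfold IsMMor at hff ⊢
      rw [comp_whiskerRight, assoc, hff, associator_naturality_middle_assoc,
        MonoidalCategory.whiskerLeft_comp_assoc]
      simp only [MonoidalCategory.whiskerLeft_comp, assoc]
    obtain ⟨g, -, hg⟩ := M.lift _ _ hgg
    have ha : mB ≫ f = g := hg _ ⟨by rw [comp_whiskerRight, assoc], by
      rw [MonoidalCategory.whiskerLeft_comp, assoc]⟩
    have hb : (f ⊗ₘ f) ≫ mM = g := by
      refine hg _ ⟨by rw [key1, ← hm1'], ?_⟩
      rw [key2, ← hm2']
      simp
    rw [ha, hb]
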